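/- Let A be a bounded linear operator on H. Then for every real number r ≥ 1 and every α ∈ [0,1], ber(A)^{2r} ≤ (α/2)·ber(A²)^r + ber((α/4)·|A|^{2r} + (1 − 3α/4)·|A*|^{2r}). -/

import Mathlib

set_option synthInstance.maxHeartbeats 1000000
set_option maxHeartbeats 1000000

open scoped NNReal
open ContinuousLinearMap

/-- The Berezin number of an operator `T`, relative to the family `k` of
(normalized reproducing kernel) vectors indexed by `Ω`. -/
noncomputable def ber {H : Type*} [NormedAddCommGroup H] [InnerProductSpace ℂ H]
    {Ω : Type*} (k : Ω → H) (T : H →L[ℂ] H) : ℝ :=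
  ⨆ lam : Ω, ‖(inner ℂ (T (k lam)) (k lam) : ℂ)‖

/-- The absolute value `|T| = (T*T)^(1/2)` of a bounded operator. -/
noncomputable def opAbs {H : Type*} [NormedAddCommGroup H] [InnerProductSpace ℂ H]
    [CompleteSpace H] (T : H →L[ℂ] H) : H →L[ℂ] H :=
  CFC.sqrt (adjoint T * T)

/-- Scalar Young-type inequality from Bernoulli. -/
lemma scalar_young {t l r : ℝ} (ht : 0 ≤ t) (hl : 0 ≤ l) (hr : 1 ≤ r) :
    r * l ^ (r - 1) * t ≤ (r - 1) * l ^ r + t ^ r := by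
  rcases hl.eq_or_lt with h0 | hl'
  · rcases hr.eq_or_lt with h1 | hr'
    · subst h0
      rw [← h1]
      simp [Real.rpow_one]
    · rw [← h0, Real.zero_rpow (by intro h; rw [sub_eq_zero] at h; exact hr'.ne h.symm),
        Real.zero_rpow (by positivity : r ≠ 0)]
      have := Real.rpow_nonneg ht r
      nlinarith
  · have hb : -1 ≤ t / l - 1 := by
      have : 0 ≤ t / l := div_nonneg ht hl'.le
      linarith
    have bern := one_add_mul_self_le_rpow_one_add hb hr
    rw [show (1 : ℝ) + (t / l - 1) = t / l by ring, Real.div_rpow ht hl'.le] at bern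
    have hlr : (0:ℝ) < l ^ r := Real.rpow_pos_of_pos hl' r
    have key := mul_le_mul_of_nonneg_right bern hlr.le
    rw [div_mul_cancel₀ _ (ne_of_gt hlr)] at key
    have e1 : l ^ (r - 1) = l ^ r / l := by
      rw [Real.rpow_sub hl', Real.rpow_one]
    have e2 : r * (t / l - 1) * l ^ r = r * t * (l ^ r / l) - r * l ^ r := by
      field_simp
    rw [e1]
    nlinarith [key, e2]

section Hilbert

variable {H : Type*} [NormedAddCommGroup H] [InnerProductSpace ℂ H]

/-- Buzano's inequality. -/
lemma buzano (a b e : H) (he : ‖e‖ = 1) :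
    ‖(inner ℂ a e : ℂ) * (inner ℂ e b : ℂ)‖ ≤ (‖a‖ * ‖b‖ + ‖(inner ℂ a b : ℂ)‖) / 2 := by
  set c : ℂ := inner ℂ e a with hc
  set w : H := (2 * c) • e - a with hw
  have hnw : ‖w‖ ^ 2 = ‖a‖ ^ 2 := by
    rw [hw, norm_sub_sq (𝕜 := ℂ)]
    have h1 : ‖(2 * c) • e‖ ^ 2 = 4 * ‖c‖ ^ 2 := by
      rw [norm_smul, he, norm_mul]
      simp; ring
    have h2 : (inner ℂ ((2 * c) • e) a : ℂ) = 2 * (starRingEnd ℂ) c * c := by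
      rw [inner_smul_left, ← hc, map_mul, Complex.conj_ofNat]
    rw [h1, h2]
    have h3 : RCLike.re ((2 * (starRingEnd ℂ) c * c)) = 2 * ‖c‖ ^ 2 := by
      simp [mul_assoc, RCLike.conj_mul, ← Complex.ofReal_pow]
    rw [h3]
    ring
  have hwb : (inner ℂ w b : ℂ) = 2 * (inner ℂ a e : ℂ) * (inner ℂ e b : ℂ) - inner ℂ a b := by
    rw [hw, inner_sub_left, inner_smul_left]
    have h4 : (starRingEnd ℂ) (2 * c) = 2 * (inner ℂ a e : ℂ) := by
      rw [map_mul, hc, inner_conj_symm, Complex.conj_ofNat]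
    rw [h4]
  have hn : ‖(inner ℂ w b : ℂ)‖ ≤ ‖a‖ * ‖b‖ := by
    have := norm_inner_le_norm (𝕜 := ℂ) w b
    have hwa : ‖w‖ = ‖a‖ := by
      have h5 := congrArg Real.sqrt hnw
      rwa [Real.sqrt_sq (norm_nonneg w), Real.sqrt_sq (norm_nonneg a)] at h5
    rwa [hwa] at this
  have htri : 2 * ‖(inner ℂ a e : ℂ) * (inner ℂ e b : ℂ)‖ - ‖(inner ℂ a b : ℂ)‖ ≤ ‖(inner ℂ w b : ℂ)‖ := by
    rw [hwb]
    calc 2 * ‖(inner ℂ a e : ℂ) * (inner ℂ e b : ℂ)‖ - ‖(inner ℂ a b : ℂ)‖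
        = ‖2 * (inner ℂ a e : ℂ) * (inner ℂ e b : ℂ)‖ - ‖(inner ℂ a b : ℂ)‖ := by
          rw [show (2:ℂ) * (inner ℂ a e : ℂ) * (inner ℂ e b : ℂ)
              = 2 * ((inner ℂ a e : ℂ) * (inner ℂ e b : ℂ)) by ring, norm_mul]
          norm_num
      _ ≤ _ := norm_sub_norm_le _ _
  linarith

variable [CompleteSpace H]

lemma inner_re_le_of_le {T S : H →L[ℂ] H} (h : T ≤ S) (x : H) :
    (inner ℂ (T x) x : ℂ).re ≤ (inner ℂ (S x) x : ℂ).re := by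
  have h' := (ContinuousLinearMap.le_def T S).mp h
  have h2 := h'.inner_nonneg_left x
  simp only [ContinuousLinearMap.sub_apply, inner_sub_left, map_sub, RCLike.re_to_complex] at h2
  have h3 := (Complex.nonneg_iff.mp h2).1; rw [Complex.sub_re] at h3
  linarith

lemma inner_re_nonneg {T : H →L[ℂ] H} (h : (0:H →L[ℂ] H) ≤ T) (x : H) :
    0 ≤ (inner ℂ (T x) x : ℂ).re := by
  simpa using inner_re_le_of_le h x

/-- McCarthy's inequality. -/
lemma mccarthy (P : H →L[ℂ] H) (hP : (0:H →L[ℂ] H) ≤ P) {x : H} (hx : ‖x‖ = 1)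
    {r : ℝ} (hr : 1 ≤ r) :
    (inner ℂ (P x) x : ℂ).re ^ r ≤ (inner ℂ ((CFC.rpow P r) x) x : ℂ).re := by
  have hr0 : (0:ℝ) < r := lt_of_lt_of_le one_pos hr
  set φ := (inner ℂ (P x) x : ℂ).re with hφdef
  set m := (inner ℂ ((CFC.rpow P r) x) x : ℂ).re with hmdef
  have hφ : 0 ≤ φ := inner_re_nonneg hP x
  have hm : 0 ≤ m := inner_re_nonneg CFC.rpow_nonneg x
  have hcont : Continuous (fun t : ℝ≥0 => t ^ (r:ℝ)) :=
    NNReal.continuous_rpow_const (le_trans zero_le_one hr)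
  -- key inequality for every lam
  have key : ∀ lam : ℝ≥0, r * (lam:ℝ) ^ (r - 1) * φ ≤ (r - 1) * (lam:ℝ) ^ r + m := by
    intro lam
    set c : ℝ≥0 := r.toNNReal * lam ^ (r - 1) with hcdef
    set d : ℝ≥0 := (r - 1).toNNReal * lam ^ (r:ℝ) with hddef
    have hcd : ∀ t : ℝ≥0, c * t ≤ d + t ^ (r:ℝ) := by
      intro t
      have hr'' : ((r.toNNReal : ℝ≥0) : ℝ) = r := Real.coe_toNNReal _ (by linarith)
      have hr' : (((r - 1).toNNReal : ℝ≥0) : ℝ) = r - 1 := Real.coe_toNNReal _ (by linarith)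
      rw [hcdef, hddef, ← NNReal.coe_le_coe]
      simp only [NNReal.coe_add, NNReal.coe_mul, NNReal.coe_rpow, hr', hr'']
      exact scalar_young t.2 lam.2 hr
    have hop : c • P ≤ d • (1 : H →L[ℂ] H) + CFC.rpow P r := by
      have h1 : cfc (fun t : ℝ≥0 => c * t) P ≤ cfc (fun t : ℝ≥0 => d + t ^ (r:ℝ)) P :=
        cfc_mono (fun t _ => hcd t) (Continuous.continuousOn (by continuity))
          (Continuous.continuousOn (by continuity))
      rw [cfc_const_mul c (fun t : ℝ≥0 => t) P continuousOn_id, cfc_id' ℝ≥0 P,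
        cfc_const_add d (fun t : ℝ≥0 => t ^ (r:ℝ)) P hcont.continuousOn] at h1
      rwa [Algebra.algebraMap_eq_smul_one,
        show cfc (fun t : ℝ≥0 => t ^ (r:ℝ)) P = CFC.rpow P r from rfl] at h1
    have hle := inner_re_le_of_le hop x
    have hL : (inner ℂ ((c • P) x) x : ℂ).re = (c:ℝ) * φ := by
      rw [ContinuousLinearMap.smul_apply, NNReal.smul_def,
        RCLike.real_smul_eq_coe_smul (K := ℂ), inner_smul_left, RCLike.conj_ofReal]
      simp [hφdef]
    have hR : (inner ℂ (((d • (1 : H →L[ℂ] H)) + CFC.rpow P r) x) x : ℂ).re = (d:ℝ) + m := by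
      rw [ContinuousLinearMap.add_apply, ContinuousLinearMap.smul_apply,
        ContinuousLinearMap.one_apply, inner_add_left, NNReal.smul_def,
        RCLike.real_smul_eq_coe_smul (K := ℂ), inner_smul_left, RCLike.conj_ofReal,
        inner_self_eq_norm_sq_to_K, hx]
      simp [hmdef]
    rw [hL, hR] at hle
    have hc' : (c:ℝ) = r * (lam:ℝ) ^ (r - 1) := by
      rw [hcdef, NNReal.coe_mul, NNReal.coe_rpow, Real.coe_toNNReal _ (by linarith : (0:ℝ) ≤ r)]
    have hd' : (d:ℝ) = (r - 1) * (lam:ℝ) ^ r := by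
      rw [hddef, NNReal.coe_mul, NNReal.coe_rpow,
        Real.coe_toNNReal _ (by linarith : (0:ℝ) ≤ r - 1)]
    rw [hc', hd'] at hle
    linarith
  -- conclude with an epsilon argument
  refine le_of_forall_pos_le_add fun ε hε => ?_
  set L : ℝ := (m + ε) ^ (r⁻¹ : ℝ) with hLdef
  have hmε : (0:ℝ) < m + ε := by linarith
  have hL : 0 < L := Real.rpow_pos_of_pos hmε _
  have hLr : L ^ r = m + ε := Real.rpow_inv_rpow hmε.le (ne_of_gt hr0)
  have hLr1 : (0:ℝ) < L ^ (r - 1) := Real.rpow_pos_of_pos hL _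
  have hLL : L ^ (r - 1) * L = L ^ r := by
    rw [← Real.rpow_add_one (ne_of_gt hL) (r - 1)]
    norm_num
  have hkey := key L.toNNReal
  rw [Real.coe_toNNReal _ hL.le] at hkey
  have hφL : φ ≤ L := by
    have e3 : r * L ^ (r - 1) * L = r * (m + ε) := by
      rw [mul_assoc, hLL, hLr]
    have h1 : r * L ^ (r - 1) * φ ≤ r * L ^ (r - 1) * L := by
      rw [e3]
      rw [hLr] at hkey
      nlinarith [hkey, hε]
    have h2 : φ * (r * L ^ (r - 1)) ≤ L * (r * L ^ (r - 1)) := by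
      nlinarith [h1]
    exact le_of_mul_le_mul_right h2 (by positivity)
  calc φ ^ r ≤ L ^ r := Real.rpow_le_rpow hφ hφL hr0.le
    _ = m + ε := hLr



lemma adjoint_mul_self_nonneg (T : H →L[ℂ] H) : (0 : H →L[ℂ] H) ≤ adjoint T * T := by
  simpa [ContinuousLinearMap.star_eq_adjoint] using star_mul_self_nonneg T

lemma rpow_opAbs_eq (T : H →L[ℂ] H) {r : ℝ} (hr : 0 ≤ r) :
    CFC.rpow (opAbs T) (2 * r) = CFC.rpow (adjoint T * T) r := by
  have h0 := adjoint_mul_self_nonneg T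
  rw [opAbs, CFC.sqrt_eq_rpow]
  calc CFC.rpow ((adjoint T * T) ^ (1/2 : ℝ)) (2 * r)
      = ((adjoint T * T) ^ (1/2 : ℝ)) ^ (2 * r : ℝ) := rfl
    _ = (adjoint T * T) ^ ((1/2) * (2 * r) : ℝ) :=
        CFC.rpow_rpow_of_exponent_nonneg _ _ _ (by norm_num) (by positivity) h0
    _ = CFC.rpow (adjoint T * T) r := by rw [show (1/2) * (2 * r) = r by ring]; rfl

lemma mccarthy_norm (T : H →L[ℂ] H) {x : H} (hx : ‖x‖ = 1) {r : ℝ} (hr : 1 ≤ r) :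
    (‖T x‖ ^ 2) ^ r ≤ (inner ℂ ((CFC.rpow (opAbs T) (2 * r)) x) x : ℂ).re := by
  have h0 := adjoint_mul_self_nonneg T
  have e2 : (inner ℂ ((adjoint T * T) x) x : ℂ).re = ‖T x‖ ^ 2 := by
    rw [ContinuousLinearMap.mul_apply, ContinuousLinearMap.adjoint_inner_left,
      inner_self_eq_norm_sq_to_K]
    simp [← Complex.ofReal_pow]
  rw [rpow_opAbs_eq T (by linarith)]
  calc (‖T x‖ ^ 2) ^ r = ((inner ℂ ((adjoint T * T) x) x : ℂ).re) ^ r := by rw [e2]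
    _ ≤ _ := mccarthy _ h0 hx hr

variable {Ω : Type*} [Nonempty Ω]

lemma ber_bddAbove (k : Ω → H) (hk : ∀ lam, ‖k lam‖ = 1) (T : H →L[ℂ] H) :
    BddAbove (Set.range fun lam => ‖(inner ℂ (T (k lam)) (k lam) : ℂ)‖) := by
  refine ⟨‖T‖, ?_⟩
  rintro y ⟨lam, rfl⟩
  calc ‖(inner ℂ (T (k lam)) (k lam) : ℂ)‖ ≤ ‖T (k lam)‖ * ‖k lam‖ := norm_inner_le_norm _ _
    _ ≤ (‖T‖ * ‖k lam‖) * ‖k lam‖ := by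
        gcongr
        exact T.le_opNorm _
    _ = ‖T‖ := by rw [hk]; ring

lemma le_ber (k : Ω → H) (hk : ∀ lam, ‖k lam‖ = 1) (T : H →L[ℂ] H) (lam : Ω) :
    ‖(inner ℂ (T (k lam)) (k lam) : ℂ)‖ ≤ ber k T :=
  le_ciSup (ber_bddAbove k hk T) lam

lemma ber_nonneg (k : Ω → H) (T : H →L[ℂ] H) : 0 ≤ ber k T :=
  Real.iSup_nonneg fun _ => norm_nonneg _

end Hilbert

theorem berezin_power_inequality_with_square
    {H : Type*} [NormedAddCommGroup H] [InnerProductSpace ℂ H] [CompleteSpace H]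
    {Ω : Type*} [Nonempty Ω] (k : Ω → H) (hk : ∀ lam, ‖k lam‖ = 1)
    (A : H →L[ℂ] H) (r : ℝ) (hr : 1 ≤ r) (α : ℝ) (hα : α ∈ Set.Icc (0 : ℝ) 1) :
    ber k A ^ (2 * r) ≤
      α / 2 * ber k (A * A) ^ r
        + ber k ((α / 4) • CFC.rpow (opAbs A) (2 * r)
            + (1 - 3 * α / 4) • CFC.rpow (opAbs (adjoint A)) (2 * r)) := by
  obtain ⟨hα0, hα1⟩ := hα
  set R₁ := CFC.rpow (opAbs A) (2 * r) with hR₁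
  set R₂ := CFC.rpow (opAbs (adjoint A)) (2 * r) with hR₂
  set B := (α / 4) • R₁ + (1 - 3 * α / 4) • R₂ with hB
  set C := α / 2 * ber k (A * A) ^ r + ber k B with hC
  have hr0 : (0:ℝ) < r := lt_of_lt_of_le one_pos hr
  have h2r : (2 * r : ℝ) ≠ 0 := by positivity
  have hCnn : 0 ≤ C := by
    have := ber_nonneg k (A * A)
    have := ber_nonneg k B
    have := Real.rpow_nonneg (ber_nonneg k (A * A)) r
    positivity
  -- pointwise estimate
  have hpt : ∀ lam : Ω, ‖(inner ℂ (A (k lam)) (k lam) : ℂ)‖ ^ (2 * r) ≤ C := by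
    intro lam
    set x := k lam with hxdef
    have hx : ‖x‖ = 1 := hk lam
    set a := ‖(inner ℂ (A x) x : ℂ)‖ with ha
    set s := ‖(inner ℂ ((A * A) x) x : ℂ)‖ with hs
    set u := ‖A x‖ with hu
    set v := ‖adjoint A x‖ with hv
    have hinner1 : (inner ℂ x (adjoint A x) : ℂ) = inner ℂ (A x) x :=
      ContinuousLinearMap.adjoint_inner_right A x x
    have hinner2 : (inner ℂ (A x) (adjoint A x) : ℂ) = inner ℂ ((A * A) x) x := by
      rw [ContinuousLinearMap.adjoint_inner_right A (A x) x, ContinuousLinearMap.mul_apply]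
    -- Buzano
    have h1 : a ^ 2 ≤ (u * v + s) / 2 := by
      have hb := buzano (A x) (adjoint A x) x hx
      rw [hinner1, hinner2] at hb
      rw [ha, sq, ← norm_mul]
      linarith [hb]
    -- Cauchy-Schwarz through the adjoint
    have h2 : a ≤ v := by
      rw [ha, ← hinner1]
      calc ‖(inner ℂ x (adjoint A x) : ℂ)‖ ≤ ‖x‖ * ‖adjoint A x‖ := norm_inner_le_norm _ _
        _ = v := by rw [hx, one_mul]
    -- combination
    have h3 : a ^ 2 ≤ (α/2) * s + (α/4) * u^2 + (1 - 3*α/4) * v^2 := by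
      nlinarith [mul_le_mul_of_nonneg_left h1 hα0,
        mul_le_mul_of_nonneg_left (mul_self_le_mul_self (norm_nonneg _) h2)
          (by linarith : (0:ℝ) ≤ 1 - α),
        mul_nonneg hα0 (sq_nonneg (u - v))]
    -- convexity of t ↦ t^r
    have h4 : (a^2)^r ≤ (α/2) * s^r + (α/4) * (u^2)^r + (1 - 3*α/4) * (v^2)^r := by
      have hstep : (a^2)^r ≤ ((α/2) * s + (α/4) * u^2 + (1 - 3*α/4) * v^2)^r :=
        Real.rpow_le_rpow (sq_nonneg a) h3 hr0.le
      have hconv := Real.rpow_arith_mean_le_arith_mean_rpow (Finset.univ)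
        ![α/2, α/4, 1 - 3*α/4] ![s, u^2, v^2]
        (by intro i _; fin_cases i <;> simp <;> linarith)
        (by simp [Fin.sum_univ_three]; ring)
        (by intro i _; fin_cases i <;> simp <;>
          first
            | exact norm_nonneg _
            | exact sq_nonneg _)
        hr
      simp only [Fin.sum_univ_three, Matrix.cons_val_zero, Matrix.cons_val_one, Matrix.head_cons,
        Matrix.cons_val_two, Matrix.tail_cons] at hconv
      exact le_trans hstep hconv
    have h5 : s^r ≤ ber k (A * A) ^ r :=
      Real.rpow_le_rpow (norm_nonneg _) (le_ber k hk (A * A) lam) hr0.le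
    have h6 : (u^2)^r ≤ (inner ℂ (R₁ x) x : ℂ).re := mccarthy_norm A hx hr
    have h7 : (v^2)^r ≤ (inner ℂ (R₂ x) x : ℂ).re := mccarthy_norm (adjoint A) hx hr
    have h8 : (α/4) * (inner ℂ (R₁ x) x : ℂ).re + (1 - 3*α/4) * (inner ℂ (R₂ x) x : ℂ).re
        = (inner ℂ (B x) x : ℂ).re := by
      rw [hB, ContinuousLinearMap.add_apply, ContinuousLinearMap.smul_apply,
        ContinuousLinearMap.smul_apply, inner_add_left,
        RCLike.real_smul_eq_coe_smul (K := ℂ) (α/4),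
        RCLike.real_smul_eq_coe_smul (K := ℂ) (1 - 3*α/4),
        inner_smul_left, inner_smul_left, RCLike.conj_ofReal, RCLike.conj_ofReal]
      simp
    have h9 : (inner ℂ (B x) x : ℂ).re ≤ ber k B := by
      calc (inner ℂ (B x) x : ℂ).re ≤ ‖(inner ℂ (B x) x : ℂ)‖ := Complex.re_le_norm _
        _ ≤ ber k B := le_ber k hk B lam
    have hfin : a ^ (2 * r) = (a^2)^r := by
      rw [show (2:ℝ) * r = ((2:ℕ):ℝ) * r by norm_num, Real.rpow_natCast_mul (norm_nonneg _)]
    rw [hfin]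
    have hw1 : (α/2) * s^r ≤ (α/2) * ber k (A * A) ^ r :=
      mul_le_mul_of_nonneg_left h5 (by linarith)
    have hw2 : (α/4) * (u^2)^r ≤ (α/4) * (inner ℂ (R₁ x) x : ℂ).re :=
      mul_le_mul_of_nonneg_left h6 (by linarith)
    have hw3 : (1 - 3*α/4) * (v^2)^r ≤ (1 - 3*α/4) * (inner ℂ (R₂ x) x : ℂ).re :=
      mul_le_mul_of_nonneg_left h7 (by linarith)
    rw [hC]
    linarith [h4, hw1, hw2, hw3, h8, h9]
  -- pass to the supremum
  have hsup : ber k A ≤ C ^ (2 * r)⁻¹ := by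
    rw [ber]
    refine ciSup_le fun lam => ?_
    calc ‖(inner ℂ (A (k lam)) (k lam) : ℂ)‖
        = (‖(inner ℂ (A (k lam)) (k lam) : ℂ)‖ ^ (2*r)) ^ (2*r)⁻¹ :=
          (Real.rpow_rpow_inv (norm_nonneg _) h2r).symm
      _ ≤ C ^ (2*r)⁻¹ :=
          Real.rpow_le_rpow (Real.rpow_nonneg (norm_nonneg _) _) (hpt lam) (by positivity)
  calc ber k A ^ (2 * r) ≤ (C ^ (2*r)⁻¹) ^ (2*r) :=
        Real.rpow_le_rpow (ber_nonneg k A) hsup (by positivity)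
    _ = C := Real.rpow_inv_rpow hCnn h2r
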